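/- For all z, w ∈ ℂ and all u, v ∈ ℓ²(ℕ, ℂᵖ): the series g := ∑_{m≥0} D_{m,w}(u_m) and h := ∑_{n≥0} D_{n,z}(v_n) converge in H, and ∑_{n,m≥0} (v_n)^* 𝒦_{n,m}(z, w) u_m = ⟨g, h⟩_H (both sides converging absolutely). Consequently the bounded operator on ℓ²(ℕ, ℂᵖ) determined by the block matrix (𝒦_{n,m}(z,w)) factors as 𝒦(z,w) = J_z J_w^*. -/

import Mathlib

open scoped ComplexConjugate InnerProductSpace

attribute [local instance] Matrix.normedAddCommGroup Matrix.normedSpace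

/-- `𝒦_{n,m}(z,w) := (1/(n!·m!)) ∂₁ⁿ∂₂ᵐ G(z, conj w)`: the normalized iterated partial
derivative of `G`, `m` times in the second variable at `conj w`, then `n` times in the first
variable at `z`.  This encodes the kernel `K(z,w) = G(z, conj w)`, entire in `z` and `w̄`. -/
noncomputable def kernelCoeff {p : ℕ} (G : ℂ × ℂ → Matrix (Fin p) (Fin p) ℂ)
    (n m : ℕ) (z w : ℂ) : Matrix (Fin p) (Fin p) ℂ :=
  ((n.factorial * m.factorial : ℂ)⁻¹) •
    iteratedDeriv n (fun z' => iteratedDeriv m (fun ζ => G (z', ζ)) (conj w)) z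

section auxiliary

open Metric

variable {E : Type*} [NormedAddCommGroup E] [NormedSpace ℂ E] [CompleteSpace E]

lemma cauchy_coeff_bound {f : ℂ → E} (hf : Differentiable ℂ f) (c : ℂ) {R M : ℝ}
    (hR : 0 < R) (hM : ∀ x ∈ Metric.sphere c R, ‖f x‖ ≤ M) (n : ℕ) :
    ‖iteratedDeriv n f c‖ ≤ n.factorial * M / R ^ n := by
  have hM0 : 0 ≤ M := le_trans (norm_nonneg _) (hM (c + R) (by simp [Complex.norm_of_nonneg hR.le, abs_of_pos hR]))
  set R' : NNReal := ⟨R, hR.le⟩ with hR'def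
  have hR' : 0 < R' := hR
  have h := hf.hasFPowerSeriesOnBall c hR'
  have h1 : iteratedDeriv n f c = n.factorial • (cauchyPowerSeries f c R' n fun _ => (1:ℂ)) := by
    rw [iteratedDeriv_eq_iteratedFDeriv, ← h.factorial_smul 1 n]
  have h2 : ‖iteratedDeriv n f c‖ ≤ (n.factorial : ℝ) * ‖cauchyPowerSeries f c R' n‖ := by
    rw [h1]
    rw [← Nat.cast_smul_eq_nsmul ℝ, norm_smul]
    simp only [Real.norm_natCast]
    gcongr
    calc ‖cauchyPowerSeries f c R' n fun _ => (1:ℂ)‖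
        ≤ ‖cauchyPowerSeries f c R' n‖ * ∏ _i : Fin n, ‖(1:ℂ)‖ :=
          (cauchyPowerSeries f c R' n).le_opNorm _
      _ = ‖cauchyPowerSeries f c R' n‖ := by simp
  have hint : (∫ θ : ℝ in (0)..2 * Real.pi, ‖f (circleMap c R' θ)‖) ≤ 2 * Real.pi * M := by
    have hc : Continuous fun θ : ℝ => ‖f (circleMap c R' θ)‖ :=
      (hf.continuous.comp (continuous_circleMap _ _)).norm
    calc (∫ θ : ℝ in (0)..2 * Real.pi, ‖f (circleMap c R' θ)‖)
        ≤ ∫ _θ : ℝ in (0)..2 * Real.pi, M := by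
          apply intervalIntegral.integral_mono_on Real.two_pi_pos.le
            (hc.intervalIntegrable _ _) (intervalIntegrable_const)
          intro θ _
          apply hM
          exact circleMap_mem_sphere c hR.le θ
      _ = 2 * Real.pi * M := by simp [mul_comm]
  have h3 := norm_cauchyPowerSeries_le f c R' n
  have habs : |(R' : ℝ)| = R := by
    simp [hR'def, abs_of_pos hR]
    exact abs_of_pos hR
  rw [habs] at h3
  have h4 : ‖cauchyPowerSeries f c R' n‖ ≤ M * R⁻¹ ^ n := by
    refine h3.trans ?_
    have h5 : (2 * Real.pi)⁻¹ * (∫ θ : ℝ in (0)..2 * Real.pi, ‖f (circleMap c R' θ)‖)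
        ≤ (2 * Real.pi)⁻¹ * (2 * Real.pi * M) := by
      have : (0:ℝ) ≤ (2 * Real.pi)⁻¹ := by positivity
      exact mul_le_mul_of_nonneg_left hint this
    have h6 : (2 * Real.pi)⁻¹ * (2 * Real.pi * M) = M := by
      field_simp
    have h7 : (0:ℝ) ≤ |R|⁻¹ ^ n := by positivity
    calc ((2 * Real.pi)⁻¹ * ∫ θ : ℝ in (0)..2 * Real.pi, ‖f (circleMap c R' θ)‖) * R⁻¹ ^ n
        ≤ ((2 * Real.pi)⁻¹ * (2 * Real.pi * M)) * R⁻¹ ^ n := by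
          apply mul_le_mul_of_nonneg_right h5
          positivity
      _ = M * R⁻¹ ^ n := by rw [h6]
  calc ‖iteratedDeriv n f c‖ ≤ (n.factorial : ℝ) * (M * R⁻¹ ^ n) := by
        refine h2.trans ?_
        exact mul_le_mul_of_nonneg_left h4 (by positivity)
    _ = n.factorial * M / R ^ n := by
        rw [inv_pow]
        ring

/-- slices of analytic functions via iterated partial derivative operator -/
lemma slice_iteratedDeriv {F : ℂ × ℂ → E} (hF : AnalyticOnNhd ℂ F Set.univ)
    (m : ℕ) (a b : ℂ) :
    iteratedDeriv m (fun t => F (a, t)) b =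
      ((fun (Φ : ℂ × ℂ → E) x => fderiv ℂ Φ x (0, 1))^[m] F) (a, b) := by
  set P : (ℂ × ℂ → E) → ℂ × ℂ → E := fun Φ x => fderiv ℂ Φ x (0, 1) with hP
  have hPa : ∀ Φ : ℂ × ℂ → E, AnalyticOnNhd ℂ Φ Set.univ →
      AnalyticOnNhd ℂ (P Φ) Set.univ := by
    intro Φ hΦ
    exact (ContinuousLinearMap.apply ℂ E ((0:ℂ), (1:ℂ))).comp_analyticOnNhd hΦ.fderiv
  induction m generalizing F with
  | zero => simp
  | succ k ih =>
    rw [iteratedDeriv_succ']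
    have hd : (deriv fun t => F (a, t)) = fun t => P F (a, t) := by
      funext t
      have h1 : HasDerivAt (fun t : ℂ => ((a : ℂ), t)) ((0:ℂ), (1:ℂ)) t :=
        (hasDerivAt_const t a).prodMk (hasDerivAt_id t)
      exact (((hF (a, t) trivial).differentiableAt.hasFDerivAt).comp_hasDerivAt t h1).deriv
    rw [hd, ih (hPa F hF), Function.iterate_succ_apply]

lemma slice_iteratedDeriv_fst {F : ℂ × ℂ → E} (hF : AnalyticOnNhd ℂ F Set.univ)
    (m : ℕ) (a b : ℂ) :
    iteratedDeriv m (fun t => F (t, b)) a =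
      ((fun (Φ : ℂ × ℂ → E) x => fderiv ℂ Φ x (1, 0))^[m] F) (a, b) := by
  set P : (ℂ × ℂ → E) → ℂ × ℂ → E := fun Φ x => fderiv ℂ Φ x (1, 0) with hP
  have hPa : ∀ Φ : ℂ × ℂ → E, AnalyticOnNhd ℂ Φ Set.univ →
      AnalyticOnNhd ℂ (P Φ) Set.univ := by
    intro Φ hΦ
    exact (ContinuousLinearMap.apply ℂ E ((1:ℂ), (0:ℂ))).comp_analyticOnNhd hΦ.fderiv
  induction m generalizing F with
  | zero => simp
  | succ k ih =>
    rw [iteratedDeriv_succ']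
    have hd : (deriv fun t => F (t, b)) = fun t => P F (t, b) := by
      funext t
      have h1 : HasDerivAt (fun t : ℂ => (t, (b : ℂ))) ((1:ℂ), (0:ℂ)) t :=
        (hasDerivAt_id t).prodMk (hasDerivAt_const t b)
      exact (((hF (t, b) trivial).differentiableAt.hasFDerivAt).comp_hasDerivAt t h1).deriv
    rw [hd, ih (hPa F hF), Function.iterate_succ_apply]


lemma kernelCoeff_norm_bound {p : ℕ} (G : ℂ × ℂ → Matrix (Fin p) (Fin p) ℂ)
    (hG : AnalyticOnNhd ℂ G Set.univ) (z w : ℂ) :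
    ∃ C : ℝ, 0 ≤ C ∧ ∀ n m : ℕ,
      ‖kernelCoeff G n m z w‖ ≤ C * (2⁻¹ : ℝ) ^ n * (2⁻¹ : ℝ) ^ m := by
  set P : (ℂ × ℂ → Matrix (Fin p) (Fin p) ℂ) → ℂ × ℂ → Matrix (Fin p) (Fin p) ℂ :=
    fun Φ x => fderiv ℂ Φ x (0, 1) with hPdef
  have hPa : ∀ Φ : ℂ × ℂ → Matrix (Fin p) (Fin p) ℂ, AnalyticOnNhd ℂ Φ Set.univ →
      AnalyticOnNhd ℂ (P Φ) Set.univ := by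
    intro Φ hΦ
    exact (ContinuousLinearMap.apply ℂ (Matrix (Fin p) (Fin p) ℂ)
      ((0:ℂ), (1:ℂ))).comp_analyticOnNhd hΦ.fderiv
  have hiter : ∀ m : ℕ, AnalyticOnNhd ℂ (P^[m] G) Set.univ := by
    intro m
    induction m with
    | zero => simpa using hG
    | succ k ih => rw [Function.iterate_succ_apply']; exact hPa _ ih
  -- compact set and bound
  obtain ⟨C₀, hC₀⟩ : ∃ C₀ : ℝ, ∀ x ∈ (closedBall z 2 ×ˢ closedBall (conj w) 2), ‖G x‖ ≤ C₀ := by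
    have hcpt : IsCompact (closedBall z 2 ×ˢ closedBall (conj w) 2) :=
      (isCompact_closedBall _ _).prod (isCompact_closedBall _ _)
    exact hcpt.exists_bound_of_continuousOn
      (fun x _ => ((hG x trivial).continuousAt).continuousWithinAt)
  set C : ℝ := max C₀ 0 with hCdef
  have hC0 : 0 ≤ C := le_max_right _ _
  have hC : ∀ x ∈ (closedBall z 2 ×ˢ closedBall (conj w) 2), ‖G x‖ ≤ C :=
    fun x hx => (hC₀ x hx).trans (le_max_left _ _)
  refine ⟨C, hC0, fun n m => ?_⟩
  -- step 1: bound ‖P^[m] G (z', conj w)‖ for z' in closed ball around z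
  have step1 : ∀ z' ∈ closedBall z 2, ‖P^[m] G (z', conj w)‖ ≤ m.factorial * C / 2 ^ m := by
    intro z' hz'
    rw [show P^[m] G (z', conj w) = iteratedDeriv m (fun t => G (z', t)) (conj w) from
      (slice_iteratedDeriv hG m z' (conj w)).symm]
    apply cauchy_coeff_bound
    · exact fun x =>
        ((hG (z', x) trivial).differentiableAt.comp x
          (((differentiable_const _).prodMk differentiable_id) x))
    · norm_num
    · intro ζ hζ
      exact hC (z', ζ) ⟨hz', sphere_subset_closedBall hζ⟩
  -- step 2: bound iteratedDeriv n of the slice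
  have hΦdiff : Differentiable ℂ (fun z' : ℂ => P^[m] G (z', conj w)) := by
    intro x
    exact ((hiter m (x, conj w) trivial).differentiableAt.comp x
      ((differentiable_id.prodMk (differentiable_const _)) x))
  have step2 : ‖iteratedDeriv n (fun z' : ℂ => P^[m] G (z', conj w)) z‖
      ≤ n.factorial * (m.factorial * C / 2 ^ m) / 2 ^ n := by
    apply cauchy_coeff_bound hΦdiff z (by norm_num)
    intro z' hz'
    exact step1 z' (sphere_subset_closedBall hz')
  -- rewrite kernelCoeff
  have hfun : (fun z' : ℂ => iteratedDeriv m (fun ζ => G (z', ζ)) (conj w))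
      = fun z' : ℂ => P^[m] G (z', conj w) :=
    funext fun z' => slice_iteratedDeriv hG m z' (conj w)
  have hker : kernelCoeff G n m z w = ((n.factorial * m.factorial : ℂ)⁻¹) •
      iteratedDeriv n (fun z' : ℂ => P^[m] G (z', conj w)) z := by
    unfold kernelCoeff
    rw [hfun]
  rw [hker, norm_smul]
  have hnorm : ‖((n.factorial * m.factorial : ℂ))⁻¹‖
      = ((n.factorial : ℝ) * m.factorial)⁻¹ := by
    rw [norm_inv]
    norm_num
  rw [hnorm]
  calc ((n.factorial : ℝ) * m.factorial)⁻¹ *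
        ‖iteratedDeriv n (fun z' : ℂ => P^[m] G (z', conj w)) z‖
      ≤ ((n.factorial : ℝ) * m.factorial)⁻¹ *
        (n.factorial * (m.factorial * C / 2 ^ m) / 2 ^ n) := by
        apply mul_le_mul_of_nonneg_left step2
        positivity
    _ = C * (2⁻¹ : ℝ) ^ n * (2⁻¹ : ℝ) ^ m := by
        have h1 : (n.factorial : ℝ) ≠ 0 := Nat.cast_ne_zero.mpr n.factorial_ne_zero
        have h2 : (m.factorial : ℝ) ≠ 0 := Nat.cast_ne_zero.mpr m.factorial_ne_zero
        field_simp
        rw [one_div, inv_pow, inv_pow]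
        field_simp

end auxiliary

lemma euclid_coord_le {p : ℕ} (x : EuclideanSpace ℂ (Fin p)) (i : Fin p) : ‖x i‖ ≤ ‖x‖ := by
  rw [EuclideanSpace.norm_eq]
  have h1 : ‖x i‖ = Real.sqrt (‖x i‖ ^ 2) := by
    rw [Real.sqrt_sq (norm_nonneg _)]
  rw [h1]
  apply Real.sqrt_le_sqrt
  exact Finset.single_le_sum (f := fun j => ‖x j‖ ^ 2) (fun j _ => by positivity)
    (Finset.mem_univ i)

lemma inner_toEuclideanLin_bound {p : ℕ} (A : Matrix (Fin p) (Fin p) ℂ)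
    (η ξ : EuclideanSpace ℂ (Fin p)) :
    ‖⟪η, Matrix.toEuclideanLin A ξ⟫_ℂ‖ ≤ (p : ℝ) ^ 2 * ‖A‖ * ‖η‖ * ‖ξ‖ := by
  have hA : ∀ i j, ‖A i j‖ ≤ ‖A‖ := fun i j => A.norm_entry_le_entrywise_sup_norm
  have hexp : ⟪η, Matrix.toEuclideanLin A ξ⟫_ℂ
      = ∑ i, conj (η i) * ∑ j, A i j * ξ j := by
    rw [PiLp.inner_apply]
    apply Finset.sum_congr rfl
    intro i _
    rw [RCLike.inner_apply]
    rw [mul_comm]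
    rfl
  rw [hexp]
  calc ‖∑ i, conj (η i) * ∑ j, A i j * ξ j‖
      ≤ ∑ i, ‖conj (η i) * ∑ j, A i j * ξ j‖ := norm_sum_le _ _
    _ ≤ ∑ i : Fin p, ‖η‖ * ((p : ℝ) * (‖A‖ * ‖ξ‖)) := by
        apply Finset.sum_le_sum
        intro i _
        rw [norm_mul, RCLike.norm_conj]
        apply mul_le_mul (euclid_coord_le η i) ?_ (norm_nonneg _) (norm_nonneg _)
        calc ‖∑ j, A i j * ξ j‖ ≤ ∑ j, ‖A i j * ξ j‖ := norm_sum_le _ _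
          _ ≤ ∑ _j : Fin p, ‖A‖ * ‖ξ‖ := by
              apply Finset.sum_le_sum
              intro j _
              rw [norm_mul]
              exact mul_le_mul (hA i j) (euclid_coord_le ξ j) (norm_nonneg _) (norm_nonneg _)
          _ = (p : ℝ) * (‖A‖ * ‖ξ‖) := by simp [Finset.sum_const, Finset.card_univ]
    _ = (p : ℝ) ^ 2 * ‖A‖ * ‖η‖ * ‖ξ‖ := by
        simp [Finset.sum_const, Finset.card_univ]
        ring

/-- In the reproducing-kernel setup (`H` a complex Hilbert space realized by
`ι` as a space of entire `ℂᵖ`-valued functions with derivative-evaluation elements `D_{n,w}η`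
satisfying `⟨f, D_{n,w}η⟩_H = η* (ι f)⁽ⁿ⁾(w)/n!` and the compatibility
`⟨D_{m,w}ξ, D_{n,z}η⟩_H = η* 𝒦_{n,m}(z,w) ξ`; the paper's inner product `⟨·,·⟩_H`, linear in the
first argument, is `⟪b, a⟫` in Mathlib's convention): for all `z, w` and `u, v ∈ ℓ²(ℕ, ℂᵖ)`
the series `g := ∑ₘ D_{m,w}(uₘ)` and `h := ∑ₙ D_{n,z}(vₙ)` converge in `H`, the family
`(n,m) ↦ (vₙ)* 𝒦_{n,m}(z,w) uₘ` is absolutely summable, and its sum is `⟨g, h⟩_H`;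
i.e. `𝒦(z,w)` factors as `J_z J_w^*`. -/
theorem kernelCoeff_factorization
    {p : ℕ} (hp : 1 ≤ p) (G : ℂ × ℂ → Matrix (Fin p) (Fin p) ℂ)
    (hG : AnalyticOnNhd ℂ G Set.univ)
    {H : Type*} [NormedAddCommGroup H] [InnerProductSpace ℂ H] [CompleteSpace H]
    (ι : H →ₗ[ℂ] ℂ → EuclideanSpace ℂ (Fin p)) (hι : Function.Injective ι)
    (hent : ∀ f : H, Differentiable ℂ (ι f))
    (D : ℕ → ℂ → EuclideanSpace ℂ (Fin p) →ₗ[ℂ] H)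
    (hD : ∀ (f : H) (n : ℕ) (w : ℂ) (η : EuclideanSpace ℂ (Fin p)),
      ⟪D n w η, f⟫_ℂ = ⟪η, (n.factorial : ℂ)⁻¹ • iteratedDeriv n (ι f) w⟫_ℂ)
    (hcompat : ∀ (n m : ℕ) (z w : ℂ) (ξ η : EuclideanSpace ℂ (Fin p)),
      ⟪D n z η, D m w ξ⟫_ℂ = ⟪η, Matrix.toEuclideanLin (kernelCoeff G n m z w) ξ⟫_ℂ)
    (z w : ℂ) (u v : lp (fun _ : ℕ => EuclideanSpace ℂ (Fin p)) 2) :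
    ∃ g h : H,
      HasSum (fun m : ℕ => D m w (u m)) g ∧
      HasSum (fun n : ℕ => D n z (v n)) h ∧
      Summable (fun nm : ℕ × ℕ =>
        ‖⟪(v nm.1 : EuclideanSpace ℂ (Fin p)),
            Matrix.toEuclideanLin (kernelCoeff G nm.1 nm.2 z w) (u nm.2)⟫_ℂ‖) ∧
      ∑' nm : ℕ × ℕ,
          ⟪(v nm.1 : EuclideanSpace ℂ (Fin p)),
            Matrix.toEuclideanLin (kernelCoeff G nm.1 nm.2 z w) (u nm.2)⟫_ℂ
        = ⟪h, g⟫_ℂ := by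
  obtain ⟨Cw, hCw0, hCw⟩ := kernelCoeff_norm_bound G hG w w
  obtain ⟨Cz, hCz0, hCz⟩ := kernelCoeff_norm_bound G hG z z
  obtain ⟨Czw, hCzw0, hCzw⟩ := kernelCoeff_norm_bound G hG z w
  have hgeo : Summable (fun n : ℕ => (2⁻¹ : ℝ) ^ n) :=
    summable_geometric_of_lt_one (by norm_num) (by norm_num)
  -- norm bound for D
  have hDle : ∀ (c : ℂ) (C : ℝ), 0 ≤ C →
      (∀ n m : ℕ, ‖kernelCoeff G n m c c‖ ≤ C * (2⁻¹ : ℝ) ^ n * (2⁻¹ : ℝ) ^ m) →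
      ∀ (m : ℕ) (ξ : EuclideanSpace ℂ (Fin p)),
        ‖D m c ξ‖ ≤ (p * Real.sqrt C * ‖ξ‖) * (2⁻¹ : ℝ) ^ m := by
    intro c C hC0 hK m ξ
    have h1 : (‖D m c ξ‖ : ℝ) ^ 2 = ‖⟪D m c ξ, D m c ξ⟫_ℂ‖ := by
      rw [inner_self_eq_norm_sq_to_K]
      simp
    have key : ‖D m c ξ‖ ^ 2 ≤ ((p * Real.sqrt C * ‖ξ‖) * (2⁻¹ : ℝ) ^ m) ^ 2 := by
      rw [h1, hcompat m m c c ξ ξ]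
      calc ‖⟪ξ, Matrix.toEuclideanLin (kernelCoeff G m m c c) ξ⟫_ℂ‖
          ≤ (p : ℝ) ^ 2 * ‖kernelCoeff G m m c c‖ * ‖ξ‖ * ‖ξ‖ :=
            inner_toEuclideanLin_bound _ _ _
        _ ≤ (p : ℝ) ^ 2 * (C * (2⁻¹ : ℝ) ^ m * (2⁻¹ : ℝ) ^ m) * ‖ξ‖ * ‖ξ‖ := by
            gcongr
            exact hK m m
        _ = ((p * Real.sqrt C * ‖ξ‖) * (2⁻¹ : ℝ) ^ m) ^ 2 := by
            rw [mul_pow, mul_pow, mul_pow, Real.sq_sqrt hC0]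
            ring
    calc ‖D m c ξ‖ = Real.sqrt (‖D m c ξ‖ ^ 2) := (Real.sqrt_sq (norm_nonneg _)).symm
      _ ≤ Real.sqrt (((p * Real.sqrt C * ‖ξ‖) * (2⁻¹ : ℝ) ^ m) ^ 2) :=
          Real.sqrt_le_sqrt key
      _ = (p * Real.sqrt C * ‖ξ‖) * (2⁻¹ : ℝ) ^ m := Real.sqrt_sq (by positivity)
  have htwo : (2 : ENNReal) ≠ 0 := by norm_num
  -- summability of the two series
  have husum : Summable (fun m : ℕ => ‖(D m w (u m) : H)‖) := by
    apply Summable.of_nonneg_of_le (fun m => norm_nonneg _)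
      (fun m => ?_) ((hgeo.mul_left ((p : ℝ) * Real.sqrt Cw * ‖u‖)))
    calc ‖(D m w (u m) : H)‖ ≤ ((p : ℝ) * Real.sqrt Cw * ‖(u m : EuclideanSpace ℂ (Fin p))‖)
          * (2⁻¹ : ℝ) ^ m := hDle w Cw hCw0 hCw m (u m)
      _ ≤ ((p : ℝ) * Real.sqrt Cw * ‖u‖) * (2⁻¹ : ℝ) ^ m := by
          gcongr
          exact lp.norm_apply_le_norm htwo u m
  have hvsum : Summable (fun n : ℕ => ‖(D n z (v n) : H)‖) := by
    apply Summable.of_nonneg_of_le (fun n => norm_nonneg _)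
      (fun n => ?_) ((hgeo.mul_left ((p : ℝ) * Real.sqrt Cz * ‖v‖)))
    calc ‖(D n z (v n) : H)‖ ≤ ((p : ℝ) * Real.sqrt Cz * ‖(v n : EuclideanSpace ℂ (Fin p))‖)
          * (2⁻¹ : ℝ) ^ n := hDle z Cz hCz0 hCz n (v n)
      _ ≤ ((p : ℝ) * Real.sqrt Cz * ‖v‖) * (2⁻¹ : ℝ) ^ n := by
          gcongr
          exact lp.norm_apply_le_norm htwo v n
  have hgsum : Summable (fun m : ℕ => D m w (u m)) := husum.of_norm
  have hhsum : Summable (fun n : ℕ => D n z (v n)) := hvsum.of_norm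
  obtain ⟨g, hg⟩ := hgsum
  obtain ⟨h, hh⟩ := hhsum
  -- double summability
  have hdbl : Summable (fun nm : ℕ × ℕ =>
      ‖⟪(v nm.1 : EuclideanSpace ℂ (Fin p)),
          Matrix.toEuclideanLin (kernelCoeff G nm.1 nm.2 z w) (u nm.2)⟫_ℂ‖) := by
    have hgeo2 : Summable (fun nm : ℕ × ℕ => (2⁻¹ : ℝ) ^ nm.1 * (2⁻¹ : ℝ) ^ nm.2) :=
      hgeo.mul_of_nonneg hgeo (fun n => by positivity) (fun m => by positivity)
    apply Summable.of_nonneg_of_le (fun nm => norm_nonneg _) (fun nm => ?_)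
      (hgeo2.mul_left ((p : ℝ) ^ 2 * Czw * ‖v‖ * ‖u‖))
    calc ‖⟪(v nm.1 : EuclideanSpace ℂ (Fin p)),
            Matrix.toEuclideanLin (kernelCoeff G nm.1 nm.2 z w) (u nm.2)⟫_ℂ‖
        ≤ (p : ℝ) ^ 2 * ‖kernelCoeff G nm.1 nm.2 z w‖ *
            ‖(v nm.1 : EuclideanSpace ℂ (Fin p))‖ * ‖(u nm.2 : EuclideanSpace ℂ (Fin p))‖ :=
          inner_toEuclideanLin_bound _ _ _
      _ ≤ (p : ℝ) ^ 2 * (Czw * (2⁻¹ : ℝ) ^ nm.1 * (2⁻¹ : ℝ) ^ nm.2) * ‖v‖ * ‖u‖ := by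
          gcongr
          · exact hCzw nm.1 nm.2
          · exact lp.norm_apply_le_norm htwo v nm.1
          · exact lp.norm_apply_le_norm htwo u nm.2
      _ = (p : ℝ) ^ 2 * Czw * ‖v‖ * ‖u‖ * ((2⁻¹ : ℝ) ^ nm.1 * (2⁻¹ : ℝ) ^ nm.2) := by ring
  have hsumf : Summable (fun nm : ℕ × ℕ =>
      ⟪(v nm.1 : EuclideanSpace ℂ (Fin p)),
          Matrix.toEuclideanLin (kernelCoeff G nm.1 nm.2 z w) (u nm.2)⟫_ℂ) := hdbl.of_norm
  -- fiberwise sums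
  have hfib : ∀ n : ℕ, HasSum (fun m : ℕ =>
      ⟪(v n : EuclideanSpace ℂ (Fin p)),
          Matrix.toEuclideanLin (kernelCoeff G n m z w) (u m)⟫_ℂ) ⟪D n z (v n), g⟫_ℂ := by
    intro n
    have h1 := (innerSL ℂ (D n z (v n))).hasSum hg
    simp only [innerSL_apply_apply] at h1
    simp only [hcompat] at h1
    exact h1
  have hha : HasSum (fun n : ℕ => ⟪D n z (v n), g⟫_ℂ) ⟪h, g⟫_ℂ := by
    have h1 := (innerSL ℂ g).hasSum hh
    simp only [innerSL_apply_apply] at h1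
    have h2 := h1.star
    simp only [RCLike.star_def, inner_conj_symm] at h2
    exact h2
  refine ⟨g, h, hg, hh, hdbl, ?_⟩
  exact (hsumf.hasSum.prod_fiberwise hfib).unique hha
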